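/- Suppose ρ is the Gaussian density N(μ, Σ) on ℝ^d with Σ symmetric positive definite, and h(x) = H·x for a fixed vector H ∈ ℝ^d. Then φ(x) = (ΣH)·(x - μ) is a zero-mean solution of the weighted Poisson equation ∇·(ρ ∇φ) = -(h - ĥ) ρ, where ĥ = H·μ; in particular the gain ∇φ = ΣH is the Kalman gain (constant in x). -/

import Mathlib

open MeasureTheory Matrix

section aux
variable {d : ℕ}

local notation "E" => EuclideanSpace ℝ (Fin d)

lemma my_grad_linear (c μ : E) (x : E) :
    HasGradientAt (fun x : E => ∑ i, c i * (x i - μ i)) c x := by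
  rw [hasGradientAt_iff_hasFDerivAt]
  have h : HasFDerivAt (fun x : E => ∑ i, c i * (x i - μ i))
      (∑ i, c i • (EuclideanSpace.proj i : E →L[ℝ] ℝ)) x := by
    apply HasFDerivAt.fun_sum
    intro i _
    exact ((EuclideanSpace.proj i).hasFDerivAt.sub_const (μ i)).const_mul (c i) (𝕜 := ℝ)
  refine h.congr_fderiv ?_
  ext v
  simp [InnerProductSpace.toDual_apply_apply, PiLp.inner_apply, mul_comm]

lemma my_quad_deriv (A : Matrix (Fin d) (Fin d) ℝ) (μ : E) (x : E) :
    HasFDerivAt (fun y : E => (fun i => y i - μ i) ⬝ᵥ A *ᵥ (fun i => y i - μ i))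
      (∑ i, ∑ j, A i j • ((x i - μ i) • (EuclideanSpace.proj j : E →L[ℝ] ℝ)
        + (x j - μ j) • (EuclideanSpace.proj i : E →L[ℝ] ℝ))) x := by
  have hfun : (fun y : E => (fun i => y i - μ i) ⬝ᵥ A *ᵥ (fun i => y i - μ i))
      = fun y : E => ∑ i, ∑ j, A i j * ((y i - μ i) * (y j - μ j)) := by
    funext y
    simp only [dotProduct, Matrix.mulVec, Finset.mul_sum]
    congr 1; funext i; congr 1; funext j; ring
  rw [hfun]
  apply HasFDerivAt.fun_sum
  intro i _
  apply HasFDerivAt.fun_sum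
  intro j _
  have h1 : HasFDerivAt (fun y : E => (EuclideanSpace.proj i : E →L[ℝ] ℝ) y - μ i)
      ((EuclideanSpace.proj i : E →L[ℝ] ℝ)) x :=
    by exact HasFDerivAt.sub_const (ContinuousLinearMap.hasFDerivAt (𝕜 := ℝ) (EuclideanSpace.proj i)) (c := μ i)
  have h2 : HasFDerivAt (fun y : E => (EuclideanSpace.proj j : E →L[ℝ] ℝ) y - μ j)
      ((EuclideanSpace.proj j : E →L[ℝ] ℝ)) x :=
    by exact HasFDerivAt.sub_const (ContinuousLinearMap.hasFDerivAt (𝕜 := ℝ) (EuclideanSpace.proj j)) (c := μ j)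
  exact (h1.mul h2).const_mul (A i j) (𝕜 := ℝ)

lemma my_sum_single (A : Matrix (Fin d) (Fin d) ℝ) (u : Fin d → ℝ) (k : Fin d) :
    ∑ i, ∑ j, A i j * (u i * (if j = k then (1:ℝ) else 0) + u j * (if i = k then 1 else 0))
      = (Aᵀ *ᵥ u) k + (A *ᵥ u) k := by
  have : ∀ i, ∑ j, A i j * (u i * (if j = k then (1:ℝ) else 0) + u j * (if i = k then 1 else 0))
      = A i k * u i + (if i = k then ∑ j, A i j * u j else 0) := by
    intro i
    rw [Finset.sum_congr rfl (fun j _ => by split_ifs with h1 h2 <;> ring :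
      ∀ j ∈ Finset.univ, A i j * (u i * (if j = k then (1:ℝ) else 0) + u j * (if i = k then 1 else 0))
        = (if j = k then A i j * u i else 0) + (if i = k then A i j * u j else 0))]
    rw [Finset.sum_add_distrib, Finset.sum_ite_eq' Finset.univ k (fun j => A i j * u i)]
    simp
  rw [Finset.sum_congr rfl (fun i _ => this i), Finset.sum_add_distrib,
    Finset.sum_ite_eq' Finset.univ k (fun i => ∑ j, A i j * u j)]
  simp [Matrix.mulVec, dotProduct, Matrix.transpose_apply, mul_comm]

end aux

/-- Divergence of a vector field on Euclidean space: `div F (x) = ∑ i ∂F_i/∂x_i`. -/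
noncomputable def divg {d : ℕ}
    (F : EuclideanSpace ℝ (Fin d) → EuclideanSpace ℝ (Fin d))
    (x : EuclideanSpace ℝ (Fin d)) : ℝ :=
  ∑ i, fderiv ℝ F x (EuclideanSpace.single i (1 : ℝ)) i

/-- Linear Gaussian case: for `ρ = N(μ,Σ)` and `h(x) = H·x`,
`φ(x) = (ΣH)·(x-μ)` is a zero-mean solution of `∇·(ρ∇φ) = -(h-ĥ)ρ` with
`ĥ = H·μ`; the gain `∇φ = ΣH` is the (constant) Kalman gain. -/
theorem stmt4 {d : ℕ} (S : Matrix (Fin d) (Fin d) ℝ) (hS : S.PosDef)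
    (μ H : EuclideanSpace ℝ (Fin d))
    (ρ h φ : EuclideanSpace ℝ (Fin d) → ℝ)
    (hρ : ∀ x, ρ x = (Real.sqrt ((2 * Real.pi) ^ d * S.det))⁻¹ *
      Real.exp (-(1/2) * ((fun i => x i - μ i) ⬝ᵥ S⁻¹ *ᵥ (fun i => x i - μ i))))
    (hh : ∀ x, h x = ∑ i, H i * x i)
    (hhat : ℝ) (hhat_def : hhat = ∑ i, H i * μ i)
    (hφ : ∀ x, φ x = ∑ i, (S *ᵥ (fun j => H j)) i * (x i - μ i)) :
    (∀ x, ∀ i, gradient φ x i = (S *ᵥ (fun j => H j)) i) ∧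
    (∀ x, divg (fun y => ρ y • gradient φ y) x = -((h x - hhat) * ρ x)) ∧
    (∫ x, φ x * ρ x = 0) := by
  classical
  set Hf : Fin d → ℝ := fun j => H j with hHf
  set c : EuclideanSpace ℝ (Fin d) := WithLp.toLp 2 (S *ᵥ Hf : Fin d → ℝ) with hc
  set Z : ℝ := (Real.sqrt ((2 * Real.pi) ^ d * S.det))⁻¹ with hZ
  set A : Matrix (Fin d) (Fin d) ℝ := S⁻¹ with hA
  have hAsymm : Aᵀ = A := by
    have := hS.1.inv
    rwa [Matrix.IsHermitian, Matrix.conjTranspose_eq_transpose_of_trivial] at this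
  have hSdet : IsUnit S.det := isUnit_iff_ne_zero.2 hS.det_pos.ne'
  have hAc : A *ᵥ c = Hf := by
    rw [hc, hA, Matrix.mulVec_mulVec, Matrix.nonsing_inv_mul S hSdet, Matrix.one_mulVec]
  -- the gradient
  have hgrad : ∀ x : EuclideanSpace ℝ (Fin d), gradient φ x = c := by
    intro x
    have hφ' : φ = fun x : EuclideanSpace ℝ (Fin d) => ∑ i, c i * (x i - μ i) := by
      funext x; rw [hφ x]
    rw [hφ']
    exact (my_grad_linear c μ x).gradient
  refine ⟨fun x i => by rw [hgrad x], ?_, ?_⟩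
  · -- divergence
    intro x
    set u : Fin d → ℝ := fun i => x i - μ i with hu
    -- derivative of ρ
    set D : EuclideanSpace ℝ (Fin d) →L[ℝ] ℝ :=
      (∑ i, ∑ j, A i j • ((x i - μ i) • (EuclideanSpace.proj j : EuclideanSpace ℝ (Fin d) →L[ℝ] ℝ)
        + (x j - μ j) • (EuclideanSpace.proj i : EuclideanSpace ℝ (Fin d) →L[ℝ] ℝ))) with hD
    have hρeq : ρ = fun y : EuclideanSpace ℝ (Fin d) =>
        Z * Real.exp (-(1/2) * ((fun i => y i - μ i) ⬝ᵥ A *ᵥ (fun i => y i - μ i))) := by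
      funext y; rw [hρ y]
    have hρ' : HasFDerivAt ρ
        ((Z * Real.exp (-(1/2) * (u ⬝ᵥ A *ᵥ u))) • ((-(1/2) : ℝ) • D)) x := by
      rw [hρeq]
      have h1 := (my_quad_deriv A μ x).const_mul (-(1/2) : ℝ) (𝕜 := ℝ)
      have h2 := h1.exp
      have h3 := h2.const_mul Z (𝕜 := ℝ)
      rw [smul_smul] at h3
      exact h3
    have hF : HasFDerivAt (fun y => ρ y • gradient φ y)
        (((Z * Real.exp (-(1/2) * (u ⬝ᵥ A *ᵥ u))) • ((-(1/2) : ℝ) • D)).smulRight c) x := by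
      have : (fun y => ρ y • gradient φ y) = fun y => ρ y • c := by
        funext y; rw [hgrad y]
      rw [this]
      exact hρ'.smul_const c
    have hρx : ρ x = Z * Real.exp (-(1/2) * (u ⬝ᵥ A *ᵥ u)) := by rw [hρ x]
    rw [divg, hF.fderiv]
    have hDapp : ∀ k, D (EuclideanSpace.single k (1:ℝ)) = (A *ᵥ u) k + (A *ᵥ u) k := by
      intro k
      rw [hD]
      have : ∀ i j, (A i j • ((x i - μ i) • (EuclideanSpace.proj j : EuclideanSpace ℝ (Fin d) →L[ℝ] ℝ)
          + (x j - μ j) • (EuclideanSpace.proj i : EuclideanSpace ℝ (Fin d) →L[ℝ] ℝ)))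
          (EuclideanSpace.single k (1:ℝ))
          = A i j * (u i * (if j = k then (1:ℝ) else 0) + u j * (if i = k then 1 else 0)) := by
        intro i j
        simp only [ContinuousLinearMap.smul_apply, ContinuousLinearMap.add_apply,
          smul_eq_mul, hu]
        have hp : ∀ l, (EuclideanSpace.proj l : EuclideanSpace ℝ (Fin d) →L[ℝ] ℝ)
            (EuclideanSpace.single k (1:ℝ)) = if l = k then (1:ℝ) else 0 := by
          intro l
          show (EuclideanSpace.single k (1:ℝ)) l = _
          rw [EuclideanSpace.single_apply]
        rw [hp i, hp j]
      rw [ContinuousLinearMap.sum_apply]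
      rw [Finset.sum_congr rfl (fun i _ => ContinuousLinearMap.sum_apply _ _ _)]
      rw [Finset.sum_congr rfl (fun i _ => Finset.sum_congr rfl (fun j _ => this i j))]
      rw [my_sum_single A u k, hAsymm]
    have step : ∀ k, ((((Z * Real.exp (-(1/2) * (u ⬝ᵥ A *ᵥ u))) • ((-(1/2) : ℝ) • D)).smulRight c)
        (EuclideanSpace.single k (1:ℝ))) k
        = -(ρ x) * ((A *ᵥ u) k * c k) := by
      intro k
      rw [ContinuousLinearMap.smulRight_apply]
      have : (((Z * Real.exp (-(1/2) * (u ⬝ᵥ A *ᵥ u))) • ((-(1/2) : ℝ) • D))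
          (EuclideanSpace.single k (1:ℝ)))
          = (Z * Real.exp (-(1/2) * (u ⬝ᵥ A *ᵥ u))) * ((-(1/2) : ℝ) * ((A *ᵥ u) k + (A *ᵥ u) k)) := by
        rw [ContinuousLinearMap.smul_apply, ContinuousLinearMap.smul_apply, hDapp k]
        simp [smul_eq_mul]
      rw [PiLp.smul_apply, this, smul_eq_mul, hρx]
      ring
    rw [Finset.sum_congr rfl (fun k _ => step k), ← Finset.mul_sum]
    have hsz : ∀ i j, A i j = A j i := by
      intro i j
      conv_lhs => rw [← hAsymm]
      exact Matrix.transpose_apply A i j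
    have hAc' : A *ᵥ (fun k => c k) = Hf := hAc
    have hdot : ∑ k, (A *ᵥ u) k * c k = h x - hhat := by
      have e1 : ∑ k, (A *ᵥ u) k * c k = ∑ j, u j * (A *ᵥ (fun k => c k)) j := by
        simp only [Matrix.mulVec, dotProduct, Finset.sum_mul, Finset.mul_sum]
        rw [Finset.sum_comm]
        exact Finset.sum_congr rfl fun j _ => Finset.sum_congr rfl fun k _ => by
          rw [hsz j k]; ring
      rw [e1, hAc', hh x, hhat_def, hu, ← Finset.sum_sub_distrib]
      exact Finset.sum_congr rfl fun j _ => by simp [hHf]; ring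
    rw [hdot]; ring
  · -- zero mean
    have hshift : (∫ x, φ x * ρ x) = ∫ y : EuclideanSpace ℝ (Fin d), φ (μ + y) * ρ (μ + y) := by
      rw [MeasureTheory.integral_add_left_eq_self μ (f := fun x => φ x * ρ x)]
    set g : EuclideanSpace ℝ (Fin d) → ℝ := fun y => φ (μ + y) * ρ (μ + y) with hg
    have hodd : ∀ y, g (-y) = - g y := by
      intro y
      have hqy : ∀ y : EuclideanSpace ℝ (Fin d),
          (fun i => (μ + y) i - μ i) = (fun i : Fin d => y i) := by
        intro y; funext i; simp
      have h1 : φ (μ + -y) = - φ (μ + y) := by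
        rw [hφ, hφ]
        rw [← Finset.sum_neg_distrib]
        refine Finset.sum_congr rfl fun i _ => ?_
        have : (μ + -y) i = μ i - y i := by simp; ring
        rw [this]
        have : (μ + y) i = μ i + y i := by simp
        rw [this]; ring
      have h2 : ρ (μ + -y) = ρ (μ + y) := by
        rw [hρ, hρ]
        congr 2
        have e1 : (fun i => (μ + -y) i - μ i) = -(fun i : Fin d => y i) := by
          funext i; simp
        have e2 : (fun i => (μ + y) i - μ i) = (fun i : Fin d => y i) := by
          funext i; simp
        rw [e1, e2, Matrix.mulVec_neg, neg_dotProduct, dotProduct_neg, neg_neg]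
      rw [hg]
      simp only [h1, h2]
      ring
    have hneg : (∫ y, g y) = ∫ y, g (-y) := (MeasureTheory.integral_neg_eq_self g _).symm
    have h5 : (∫ y : EuclideanSpace ℝ (Fin d), g (-y)) = - ∫ y : EuclideanSpace ℝ (Fin d), g y := by
      rw [show (fun y : EuclideanSpace ℝ (Fin d) => g (-y)) = fun y => - g y from funext hodd]
      exact integral_neg g
    have h6 : (∫ y : EuclideanSpace ℝ (Fin d), g y) = 0 := by
      have := hneg.trans h5
      linarith
    rw [hshift]
    exact h6
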